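/- Let G be an abelian group (written multiplicatively) and D : G → G an endomorphism. Realize the colimit L of the system G →^D G →^D ⋯ as equivalence classes of sequences (xᵢ)_{i≤0} that eventually satisfy D(xᵢ) = x_{i−1}, two sequences being equivalent if they eventually coincide, and let ι : G → L be the structural map at stage 0. Let β : L → L be the automorphism induced by D. Then ι restricts to an isomorphism from Ker(D − 1) onto Ker(β − 1), and ι induces an isomorphism from Coker(D − 1) onto Coker(β − 1). -/

import Mathlib

namespace Stmt11

variable {G : Type*} [AddCommGroup G]

/-- Sequences `(xᵢ)_{i ≤ 0}` (indexed here by `n = −i ∈ ℕ`) which eventually satisfy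
`D xᵢ = x_{i−1}`, i.e. `y (n+1) = D (y n)` for all large `n`. -/
def evSeq (D : G →+ G) : AddSubgroup (ℕ → G) where
  carrier := {y | ∃ N, ∀ n ≥ N, y (n + 1) = D (y n)}
  zero_mem' := ⟨0, fun n _ => by simp⟩
  add_mem' := by
    rintro a b ⟨N, hN⟩ ⟨M, hM⟩
    exact ⟨max N M, fun n hn => by
      simp [hN n (le_trans (le_max_left _ _) hn), hM n (le_trans (le_max_right _ _) hn)]⟩
  neg_mem' := by
    rintro a ⟨N, hN⟩
    exact ⟨N, fun n hn => by simp [hN n hn]⟩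

/-- Sequences which eventually coincide with `0`. -/
def evZero (D : G →+ G) : AddSubgroup ↥(evSeq D) where
  carrier := {y | ∃ N, ∀ n ≥ N, (y : ℕ → G) n = 0}
  zero_mem' := ⟨0, fun n _ => rfl⟩
  add_mem' := by
    rintro a b ⟨N, hN⟩ ⟨M, hM⟩
    exact ⟨max N M, fun n hn => by
      have h1 := hN n (le_trans (le_max_left _ _) hn)
      have h2 := hM n (le_trans (le_max_right _ _) hn)
      simp [AddSubgroup.coe_add, Pi.add_apply, h1, h2]⟩
  neg_mem' := by
    rintro a ⟨N, hN⟩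
    exact ⟨N, fun n hn => by simp [hN n hn]⟩

/-- The realization `L` of the colimit `colim (G →^D G →^D ⋯)`: eventually `D`-compatible
sequences modulo eventual equality. -/
def Lim (D : G →+ G) := ↥(evSeq D) ⧸ evZero D

noncomputable instance (D : G →+ G) : AddCommGroup (Lim D) :=
  QuotientAddGroup.Quotient.addCommGroup (evZero D)

/-- The structural map `ι : G → L` at stage `0`. -/
def iota (D : G →+ G) (g : G) : Lim D :=
  QuotientAddGroup.mk ⟨fun n => D^[n] g, 0, fun n _ => Function.iterate_succ_apply' D n g⟩

/-- The endomorphism of `evSeq D` given by applying `D` pointwise. -/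
def Dhat (D : G →+ G) : ↥(evSeq D) →+ ↥(evSeq D) :=
  AddMonoidHom.mk'
    (fun y => ⟨fun n => D (y.1 n), by
      obtain ⟨N, hN⟩ := y.2
      exact ⟨N, fun n hn => by simp only []; rw [hN n hn]⟩⟩)
    (fun a b => by
      apply Subtype.ext
      funext n
      simp)

/-- The map `β : L → L` induced by `D` (it satisfies `β ∘ ι = ι ∘ D`). -/
noncomputable def beta (D : G →+ G) : Lim D →+ Lim D :=
  QuotientAddGroup.map (evZero D) (evZero D) (Dhat D)
    (by rintro y ⟨N, hN⟩; exact ⟨N, fun n hn => by simp [Dhat, hN n hn]⟩)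

section Aux

variable (D : G →+ G)

lemma iota_add (g h : G) : iota D (g + h) = iota D g + iota D h := by
  unfold iota
  erw [← QuotientAddGroup.mk_add]
  congr 1
  apply Subtype.ext
  funext n
  exact iterate_map_add D n g h

/-- `ι` as an additive hom. -/
noncomputable def iotaHom : G →+ Lim D := AddMonoidHom.mk' (iota D) (iota_add D)

lemma beta_mk (a : ↥(evSeq D)) :
    beta D (QuotientAddGroup.mk a) = QuotientAddGroup.mk (Dhat D a) := rfl

lemma beta_iota (g : G) : beta D (iota D g) = iota D (D g) := by
  unfold iota
  rw [beta_mk]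
  congr 1
  apply Subtype.ext
  funext n
  exact (Function.iterate_succ_apply' (⇑D) n g).symm.trans
    (Function.iterate_succ_apply (⇑D) n g)

lemma Dhat_iter_apply (k : ℕ) (y : ↥(evSeq D)) (n : ℕ) :
    (((Dhat D)^[k] y) : ℕ → G) n = D^[k] ((y : ℕ → G) n) := by
  induction k with
  | zero => rfl
  | succ k ih =>
    rw [Function.iterate_succ_apply', Function.iterate_succ_apply']
    show D ((((Dhat D)^[k] y) : ℕ → G) n) = D (D^[k] ((y : ℕ → G) n))
    rw [ih]

lemma telescope (g : G) : ∀ n : ℕ, ∃ s : G, D^[n] g - g = D s - s := by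
  intro n
  induction n with
  | zero => exact ⟨0, by simp⟩
  | succ n ih =>
    obtain ⟨s, hs⟩ := ih
    refine ⟨D s + g, ?_⟩
    rw [Function.iterate_succ_apply']
    have h2 : D^[n] g = D s - s + g := by rw [← hs]; abel
    rw [h2, map_add, map_add, map_sub]
    abel

lemma mk_beta_eq (x : Lim D) :
    (QuotientAddGroup.mk (beta D x) :
        Lim D ⧸ (beta D - AddMonoidHom.id (Lim D)).range) = QuotientAddGroup.mk x := by
  rw [QuotientAddGroup.eq]
  exact ⟨-x, by simp [AddMonoidHom.sub_apply]⟩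

lemma mk_beta_iter_eq (k : ℕ) (x : Lim D) :
    (QuotientAddGroup.mk ((beta D)^[k] x) :
        Lim D ⧸ (beta D - AddMonoidHom.id (Lim D)).range) = QuotientAddGroup.mk x := by
  induction k with
  | zero => rfl
  | succ k ih => rw [Function.iterate_succ_apply', mk_beta_eq, ih]

lemma beta_iter_mk (k : ℕ) (y : ↥(evSeq D)) :
    (beta D)^[k] (QuotientAddGroup.mk y) = QuotientAddGroup.mk ((Dhat D)^[k] y) := by
  induction k with
  | zero => rfl
  | succ k ih =>
    erw [Function.iterate_succ_apply', Function.iterate_succ_apply', ih, beta_mk]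

end Aux

/-- `ι` restricts to an isomorphism `Ker (D − 1) ≅ Ker (β − 1)` and induces
an isomorphism `Coker (D − 1) ≅ Coker (β − 1)`. -/
theorem stmt_11 (D : G →+ G) :
    (∃ e : (D - AddMonoidHom.id G).ker ≃+ (beta D - AddMonoidHom.id (Lim D)).ker,
      ∀ g : (D - AddMonoidHom.id G).ker, (e g : Lim D) = iota D (g : G)) ∧
    (∃ e' : G ⧸ (D - AddMonoidHom.id G).range ≃+
        Lim D ⧸ (beta D - AddMonoidHom.id (Lim D)).range,
      ∀ g : G, e' (QuotientAddGroup.mk g) = QuotientAddGroup.mk (iota D g)) := by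
  constructor
  · -- kernel part
    have hmem : ∀ g : G, D g = g →
        iota D g ∈ (beta D - AddMonoidHom.id (Lim D)).ker := by
      intro g hg
      rw [AddMonoidHom.mem_ker, AddMonoidHom.sub_apply, AddMonoidHom.id_apply, beta_iota, hg,
        sub_self]
    let f : (D - AddMonoidHom.id G).ker →+ (beta D - AddMonoidHom.id (Lim D)).ker :=
      AddMonoidHom.mk'
        (fun g => ⟨iota D (g : G), hmem _ (by
          have h := g.2
          rwa [AddMonoidHom.mem_ker, AddMonoidHom.sub_apply, AddMonoidHom.id_apply,
            sub_eq_zero] at h)⟩)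
        (fun a b => by
          apply Subtype.ext
          show iota D ((a : G) + (b : G)) = iota D (a : G) + iota D (b : G)
          exact iota_add D _ _)
    have hinj : Function.Injective f := by
      rw [injective_iff_map_eq_zero]
      intro g hg
      have hg0 : iota D (g : G) = 0 := congrArg Subtype.val hg
      erw [iota, QuotientAddGroup.eq_zero_iff] at hg0
      obtain ⟨N, hN⟩ := hg0
      have hD : D (g : G) = (g : G) := by
        have h := g.2
        rwa [AddMonoidHom.mem_ker, AddMonoidHom.sub_apply, AddMonoidHom.id_apply,
          sub_eq_zero] at h
      have hgz : (g : G) = 0 := by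
        have h := hN N le_rfl
        show (g : G) = 0
        rwa [show ((⟨fun n => D^[n] (g : G), 0, fun n _ =>
            Function.iterate_succ_apply' (⇑D) n (g : G)⟩ : ↥(evSeq D)) : ℕ → G) N
            = D^[N] (g : G) from rfl, Function.iterate_fixed hD N] at h
      exact Subtype.ext hgz
    have hsurj : Function.Surjective f := by
      intro x
      obtain ⟨y, hy⟩ := QuotientAddGroup.mk_surjective x.1
      have hx := x.2
      rw [AddMonoidHom.mem_ker, AddMonoidHom.sub_apply, AddMonoidHom.id_apply, sub_eq_zero,
        ← hy, beta_mk] at hx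
      replace hx := QuotientAddGroup.eq.mp hx
      obtain ⟨M, hM⟩ := hx
      obtain ⟨N, hN⟩ := y.2
      have hfix : ∀ n ≥ max N M, D ((y : ℕ → G) n) = (y : ℕ → G) n := by
        intro n hn
        have h := hM n (le_trans (le_max_right _ _) hn)
        have h' : -(D ((y : ℕ → G) n)) + (y : ℕ → G) n = 0 := h
        rw [neg_add_eq_zero] at h'
        exact h'
      have hconst : ∀ n ≥ max N M, (y : ℕ → G) n = (y : ℕ → G) (max N M) := by
        intro n hn
        induction n, hn using Nat.le_induction with
        | base => rfl
        | succ n hn ih =>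
          rw [hN n (le_trans (le_max_left _ _) hn), hfix n hn, ih]
      set g := (y : ℕ → G) (max N M) with hgdef
      have hDg : D g = g := hfix _ le_rfl
      refine ⟨⟨g, ?_⟩, Subtype.ext ?_⟩
      · rw [AddMonoidHom.mem_ker, AddMonoidHom.sub_apply, AddMonoidHom.id_apply, sub_eq_zero]
        exact hDg
      · show iota D g = x.1
        rw [← hy, iota]
        refine QuotientAddGroup.eq.mpr ?_
        refine ⟨max N M, fun n hn => ?_⟩
        show -(D^[n] g) + (y : ℕ → G) n = 0
        rw [Function.iterate_fixed hDg n, hconst n hn, neg_add_cancel]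
    exact ⟨AddEquiv.ofBijective f ⟨hinj, hsurj⟩, fun g => rfl⟩
  · -- cokernel part
    let φ : G →+ Lim D ⧸ (beta D - AddMonoidHom.id (Lim D)).range :=
      (QuotientAddGroup.mk' _).comp (iotaHom D)
    have hS : (D - AddMonoidHom.id G).range ≤ φ.ker := by
      rintro _ ⟨g, rfl⟩
      rw [AddMonoidHom.mem_ker]
      show (QuotientAddGroup.mk (iota D ((D - AddMonoidHom.id G) g)) :
        Lim D ⧸ (beta D - AddMonoidHom.id (Lim D)).range) = 0
      rw [QuotientAddGroup.eq_zero_iff]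
      refine ⟨iota D g, ?_⟩
      rw [AddMonoidHom.sub_apply, AddMonoidHom.id_apply, beta_iota]
      rw [AddMonoidHom.sub_apply, AddMonoidHom.id_apply]
      exact ((iotaHom D).map_sub (D g) g).symm
    let ehom := QuotientAddGroup.lift _ φ hS
    have hinj : Function.Injective ehom := by
      rw [injective_iff_map_eq_zero]
      intro q
      induction q using QuotientAddGroup.induction_on with
      | H g =>
        intro h0
        have hmem : iota D g ∈ (beta D - AddMonoidHom.id (Lim D)).range := by
          rw [← QuotientAddGroup.eq_zero_iff]
          exact h0
        obtain ⟨x, hx⟩ := hmem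
        obtain ⟨y, rfl⟩ := QuotientAddGroup.mk_surjective x
        have hx' : (QuotientAddGroup.mk (Dhat D y - y) : ↥(evSeq D) ⧸ evZero D) =
            QuotientAddGroup.mk ⟨fun n => D^[n] g, 0, fun n _ => Function.iterate_succ_apply' D n g⟩ := hx
        replace hx := QuotientAddGroup.eq.mp hx'
        obtain ⟨M, hM⟩ := hx
        have h1 : D^[M] g = D ((y : ℕ → G) M) - (y : ℕ → G) M := by
          have h := hM M le_rfl
          have h' : -(D ((y : ℕ → G) M) - (y : ℕ → G) M) + D^[M] g = 0 := h
          rw [neg_add_eq_zero] at h'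
          exact h'.symm
        obtain ⟨s, hs⟩ := telescope D g M
        rw [QuotientAddGroup.eq_zero_iff]
        refine ⟨(y : ℕ → G) M - s, ?_⟩
        rw [AddMonoidHom.sub_apply, AddMonoidHom.id_apply, map_sub]
        have hre : D ((y : ℕ → G) M) - D s - ((y : ℕ → G) M - s)
            = (D ((y : ℕ → G) M) - (y : ℕ → G) M) - (D s - s) := by abel
        rw [hre, ← h1, ← hs]
        abel
    have hsurj : Function.Surjective ehom := by
      intro q
      induction q using QuotientAddGroup.induction_on with
      | H x =>
        obtain ⟨y, rfl⟩ := QuotientAddGroup.mk_surjective x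
        obtain ⟨N, hN⟩ := y.2
        refine ⟨QuotientAddGroup.mk ((y : ℕ → G) N), ?_⟩
        show (QuotientAddGroup.mk (iota D ((y : ℕ → G) N)) :
          Lim D ⧸ (beta D - AddMonoidHom.id (Lim D)).range)
          = QuotientAddGroup.mk (QuotientAddGroup.mk y)
        erw [← mk_beta_iter_eq D N (QuotientAddGroup.mk y)]
        congr 1
        rw [beta_iter_mk, iota]
        refine QuotientAddGroup.eq.mpr ?_
        have key : ∀ m : ℕ, (y : ℕ → G) (N + m) = D^[m] ((y : ℕ → G) N) := by
          intro m
          induction m with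
          | zero => rfl
          | succ m ih =>
            rw [Function.iterate_succ_apply', ← ih, ← hN (N + m) (Nat.le_add_right _ _)]
            rfl
        refine ⟨N, fun n hn => ?_⟩
        obtain ⟨m, rfl⟩ := Nat.exists_eq_add_of_le hn
        show -(D^[N + m] ((y : ℕ → G) N)) + (((Dhat D)^[N] y : ↥(evSeq D)) : ℕ → G) (N + m) = 0
        rw [Dhat_iter_apply, key m, ← Function.iterate_add_apply, neg_add_cancel]
    exact ⟨AddEquiv.ofBijective ehom ⟨hinj, hsurj⟩, fun g => rfl⟩

end Stmt11
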